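/- Let n ≥ 3, let D be any orientation of the cycle C_n whose vertices are labelled bijectively by v_1, …, v_n, and let s_k be a predator-prey strategy on D with residual population r_{s_k}(D). Let D' be obtained from D by squeezing a new vertex v_{n+1} (with initial population n+1) in between two adjacent vertices v_p and v_q of the cycle: the arc between v_p and v_q is replaced by two new arcs, one joining v_p and v_{n+1} and one joining v_{n+1} and v_q, each oriented in either direction. Then there is a predator-prey strategy s*_k on D' (the minimal deviation of s_k accommodating v_{n+1}) whose residual population equals r_{s_k}(D) + (n−1). -/

import Mathlib

/-- A state of the Grog algorithm: a finite set of remaining arcs (on vertices `v_1, v_2, …`,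
identified with positive naturals) together with the current population of every vertex. -/
structure PPState where
  arcs : Finset (ℕ × ℕ)
  pop : ℕ → ℕ

/-- One predation step along the arc `a = (u, w)`: the arc is deleted and the populations
of `u` and `w` each decrease by `1`. -/
def predStep (s : PPState) (a : ℕ × ℕ) : PPState :=
  ⟨s.arcs.erase a, fun v => if v = a.1 ∨ v = a.2 then s.pop v - 1 else s.pop v⟩

/-- The arc `a` may be predated along in state `s`: it is a current arc and both of its
endpoints have current population at least `1`. -/
def validArc (s : PPState) (a : ℕ × ℕ) : Prop :=
  a ∈ s.arcs ∧ 1 ≤ s.pop a.1 ∧ 1 ≤ s.pop a.2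

/-- Run a sequence of predation steps from a state. -/
def runSeq : PPState → List (ℕ × ℕ) → PPState
  | s, [] => s
  | s, a :: l => runSeq (predStep s a) l

/-- The sequence of predation steps is valid from state `s`. -/
def ValidSeq : PPState → List (ℕ × ℕ) → Prop
  | _, [] => True
  | s, a :: l => validArc s a ∧ ValidSeq (predStep s a) l

/-- No further predation step is possible. -/
def Terminal (s : PPState) : Prop := ∀ a ∈ s.arcs, ¬ validArc s a

/-- A predator-prey strategy from state `s`: a maximal valid sequence of predation steps. -/
def IsStrategy (s : PPState) (l : List (ℕ × ℕ)) : Prop :=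
  ValidSeq s l ∧ Terminal (runSeq s l)

/-- The initial state of the digraph with arc set `A`, with initial populations `ρ(v_i) = i`. -/
def initState (A : Finset (ℕ × ℕ)) : PPState := ⟨A, id⟩

/-- The (residual) population of a state, summed over the vertices `v_1, …, v_n`. -/
def resid (n : ℕ) (s : PPState) : ℕ := ∑ v ∈ Finset.Icc 1 n, s.pop v

/-- The grog number of the digraph on `v_1, …, v_n` with arc set `A`: the minimum of the
residual population over all predator-prey strategies. -/
noncomputable def grogD (n : ℕ) (A : Finset (ℕ × ℕ)) : ℕ :=
  sInf {r | ∃ l, IsStrategy (initState A) l ∧ resid n (runSeq (initState A) l) = r}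

/-- `A` is an orientation of the labelled graph obtained from the simple graph `G` via the
bijective labelling `f` of its vertices by `v_1, …, v_n`. -/
def LabelledOrientation {V : Type*} (G : SimpleGraph V) (n : ℕ) (f : V → ℕ)
    (A : Finset (ℕ × ℕ)) : Prop :=
  Function.Injective f ∧ Set.range f = ↑(Finset.Icc 1 n) ∧
  (∀ u v, G.Adj u v ↔ ((f u, f v) ∈ A ∨ (f v, f u) ∈ A)) ∧
  (∀ u v, ¬(((f u, f v) ∈ A) ∧ ((f v, f u) ∈ A))) ∧
  (∀ a ∈ A, ∃ u v, G.Adj u v ∧ a = (f u, f v))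

/-- `A` is an orientation of the path `P_n` whose vertices, in path order, are labelled
`p 0, p 1, …, p (n-1)`, where `p` is a bijection onto `{1, …, n}`. -/
def PathOrientation (n : ℕ) (p : ℕ → ℕ) (A : Finset (ℕ × ℕ)) : Prop :=
  Set.BijOn p (Set.Iio n) (Set.Icc 1 n) ∧
  (∀ i, i + 1 < n →
    (((p i, p (i+1)) ∈ A ∨ (p (i+1), p i) ∈ A) ∧
      ¬(((p i, p (i+1)) ∈ A) ∧ ((p (i+1), p i) ∈ A)))) ∧
  (∀ a ∈ A, ∃ i, i + 1 < n ∧ (a = (p i, p (i+1)) ∨ a = (p (i+1), p i)))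

/-- `A` is an orientation of the cycle `C_n` whose vertices, in cyclic order, are labelled
`p 0, p 1, …, p (n-1)`, where `p` is a bijection onto `{1, …, n}`. -/
def CycleOrientation (n : ℕ) (p : ℕ → ℕ) (A : Finset (ℕ × ℕ)) : Prop :=
  Set.BijOn p (Set.Iio n) (Set.Icc 1 n) ∧
  (∀ i < n,
    (((p i, p ((i+1) % n)) ∈ A ∨ (p ((i+1) % n), p i) ∈ A) ∧
      ¬(((p i, p ((i+1) % n)) ∈ A) ∧ ((p ((i+1) % n), p i) ∈ A)))) ∧
  (∀ a ∈ A, ∃ i < n, a = (p i, p ((i+1) % n)) ∨ a = (p ((i+1) % n), p i))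

section Helpers

lemma runSeq_append (l₁ l₂ : List (ℕ × ℕ)) : ∀ s, runSeq s (l₁ ++ l₂) = runSeq (runSeq s l₁) l₂ := by
  induction l₁ with
  | nil => intro s; rfl
  | cons a t ih =>
    intro s
    show runSeq (predStep s a) (t ++ l₂) = runSeq (runSeq (predStep s a) t) l₂
    exact ih _

lemma validSeq_append (l₁ l₂ : List (ℕ × ℕ)) : ∀ s,
    ValidSeq s (l₁ ++ l₂) ↔ ValidSeq s l₁ ∧ ValidSeq (runSeq s l₁) l₂ := by
  induction l₁ with
  | nil => intro s; simp [ValidSeq, runSeq]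
  | cons a t ih => intro s; simp [ValidSeq, runSeq, ih, and_assoc]

lemma arcs_runSeq (l : List (ℕ × ℕ)) : ∀ s, (runSeq s l).arcs = s.arcs \ l.toFinset := by
  induction l with
  | nil => intro s; simp [runSeq]
  | cons a t ih =>
    intro s
    rw [runSeq, ih]
    ext b
    simp only [predStep, Finset.mem_sdiff, Finset.mem_erase, List.toFinset_cons,
      Finset.mem_insert, List.mem_toFinset, not_or]
    tauto

lemma pop_runSeq (l : List (ℕ × ℕ)) : ∀ s, ValidSeq s l → ∀ v,
    (runSeq s l).pop v + l.countP (fun a => decide (v = a.1 ∨ v = a.2)) = s.pop v := by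
  induction l with
  | nil => intro s _ v; simp [runSeq]
  | cons a t ih =>
    intro s hv v
    obtain ⟨⟨ha, h1, h2⟩, hrest⟩ := hv
    rw [runSeq, List.countP_cons]
    simp only [decide_eq_true_eq]
    have key := ih (predStep s a) hrest v
    by_cases hc : v = a.1 ∨ v = a.2
    · have hp : (predStep s a).pop v = s.pop v - 1 := by simp [predStep, hc]
      have hv1 : 1 ≤ s.pop v := by rcases hc with h | h <;> rw [h] <;> assumption
      rw [if_pos hc]
      omega
    · have hp : (predStep s a).pop v = s.pop v := by simp [predStep, hc]
      rw [if_neg hc]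
      omega

lemma mem_arcs_of_validSeq (l : List (ℕ × ℕ)) : ∀ s, ValidSeq s l → ∀ a ∈ l, a ∈ s.arcs := by
  induction l with
  | nil => intro s _ a ha; simp at ha
  | cons b t ih =>
    intro s hv a ha
    rcases List.mem_cons.mp ha with h | h
    · subst h; exact hv.1.1
    · have := ih (predStep s b) hv.2 a h
      exact Finset.mem_of_mem_erase this

lemma nodup_of_validSeq (l : List (ℕ × ℕ)) : ∀ s, ValidSeq s l → l.Nodup := by
  induction l with
  | nil => intro _ _; simp
  | cons b t ih =>
    intro s hv
    refine List.nodup_cons.mpr ⟨?_, ih _ hv.2⟩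
    intro hb
    have := mem_arcs_of_validSeq t _ hv.2 b hb
    simp [predStep] at this

lemma predStep_pop_le (s : PPState) (b : ℕ × ℕ) (v : ℕ) : (predStep s b).pop v ≤ s.pop v := by
  by_cases h : v = b.1 ∨ v = b.2 <;> simp [predStep, h] <;> omega

lemma validSeq_transfer (w : ℕ) (l : List (ℕ × ℕ)) : ∀ (s s' : PPState),
    ValidSeq s l → l.Nodup → (∀ a ∈ l, a ∈ s'.arcs) →
    (∀ a ∈ l, a.1 ≠ w ∧ a.2 ≠ w) →
    (∀ v, v ≠ w → s.pop v ≤ s'.pop v) → ValidSeq s' l := by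
  induction l with
  | nil => intro _ _ _ _ _ _ _; trivial
  | cons b t ih =>
    intro s s' hv hnd hmem hw hpop
    obtain ⟨⟨hb, h1, h2⟩, hrest⟩ := hv
    have hbw := hw b List.mem_cons_self
    refine ⟨⟨hmem b List.mem_cons_self, ?_, ?_⟩, ?_⟩
    · exact le_trans h1 (hpop b.1 hbw.1)
    · exact le_trans h2 (hpop b.2 hbw.2)
    · refine ih (predStep s b) (predStep s' b) hrest (List.nodup_cons.mp hnd).2 ?_
        (fun a ha => hw a (List.mem_cons_of_mem _ ha)) ?_
      · intro a ha
        have hmm : a ∈ s'.arcs := hmem a (List.mem_cons_of_mem _ ha)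
        have hab : a ≠ b := by rintro rfl; exact (List.nodup_cons.mp hnd).1 ha
        simp [predStep, Finset.mem_erase, hab, hmm]
      · intro v hv'
        have := hpop v hv'
        by_cases hc : v = b.1 ∨ v = b.2 <;> simp [predStep, hc] <;> omega

lemma countP_le_one (l : List (ℕ × ℕ)) (P : ℕ × ℕ → Bool) (hnd : l.Nodup)
    (h : ∀ a ∈ l, P a → ∀ b ∈ l, P b → a = b) : l.countP P ≤ 1 := by
  rw [List.countP_eq_length_filter]
  rcases hf : l.filter P with _ | ⟨x, _ | ⟨y, t⟩⟩
  · simp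
  · simp
  · exfalso
    have hx : x ∈ l.filter P := by rw [hf]; simp
    have hy : y ∈ l.filter P := by rw [hf]; simp
    have hnd' := hnd.filter P
    rw [hf] at hnd'
    have hxy : x ≠ y := by
      intro hxyeq; subst hxyeq; exact (List.nodup_cons.mp hnd').1 (by simp)
    exact hxy (h x (List.mem_of_mem_filter hx) (List.of_mem_filter hx) y
      (List.mem_of_mem_filter hy) (List.of_mem_filter hy))

end Helpers

lemma other_arc_unique (n : ℕ) (hn : 3 ≤ n) (p : ℕ → ℕ) (A : Finset (ℕ × ℕ))
    (hcyc : CycleOrientation n p A) (x : ℕ) (j : ℕ) (hj : j < n) (hx : x = p j)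
    (e : ℕ × ℕ) (he : e ∈ A) (hex : x = e.1 ∨ x = e.2) :
    ∀ a ∈ A, a ≠ e → (x = a.1 ∨ x = a.2) → ∀ b ∈ A, b ≠ e → (x = b.1 ∨ x = b.2) → a = b := by
  obtain ⟨hbij, hor, hmem⟩ := hcyc
  have hinj : ∀ i < n, ∀ k < n, p i = p k → i = k := fun i hi k hk h =>
    hbij.injOn (Set.mem_Iio.mpr hi) (Set.mem_Iio.mpr hk) h
  have hsucc_lt : ∀ i, i < n → (i + 1) % n < n := fun i _ => Nat.mod_lt _ (by omega)
  have hsucc_inj : ∀ i < n, ∀ k < n, (i + 1) % n = (k + 1) % n → i = k := by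
    intro i hi k hk h
    rcases Nat.lt_or_ge (i + 1) n with h1 | h1 <;> rcases Nat.lt_or_ge (k + 1) n with h2 | h2
    · rw [Nat.mod_eq_of_lt h1, Nat.mod_eq_of_lt h2] at h; omega
    · have hk1 : k + 1 = n := by omega
      rw [Nat.mod_eq_of_lt h1, hk1, Nat.mod_self] at h; omega
    · have hi1 : i + 1 = n := by omega
      rw [hi1, Nat.mod_self, Nat.mod_eq_of_lt h2] at h; omega
    · omega
  have idx : ∀ a ∈ A, (x = a.1 ∨ x = a.2) → ∃ i, i < n ∧
      (a = (p i, p ((i + 1) % n)) ∨ a = (p ((i + 1) % n), p i)) ∧ (i = j ∨ (i + 1) % n = j) := by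
    intro a ha hax
    obtain ⟨i, hi, hia⟩ := hmem a ha
    refine ⟨i, hi, hia, ?_⟩
    have hxi : x = p i ∨ x = p ((i + 1) % n) := by
      rcases hia with h | h <;> rw [h] at hax <;> [exact hax; exact hax.symm]
    rcases hxi with h | h
    · exact Or.inl (hinj i hi j hj (by rw [← h, hx]))
    · exact Or.inr (hinj ((i + 1) % n) (hsucc_lt i hi) j hj (by rw [← h, hx]))
  have same_idx : ∀ i, i < n → ∀ a ∈ A, ∀ b ∈ A,
      (a = (p i, p ((i + 1) % n)) ∨ a = (p ((i + 1) % n), p i)) →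
      (b = (p i, p ((i + 1) % n)) ∨ b = (p ((i + 1) % n), p i)) → a = b := by
    intro i hi a ha b hb h1 h2
    rcases h1 with h1 | h1 <;> rcases h2 with h2 | h2
    · rw [h1, h2]
    · exfalso; rw [h1] at ha; rw [h2] at hb; exact (hor i hi).2 ⟨ha, hb⟩
    · exfalso; rw [h1] at ha; rw [h2] at hb; exact (hor i hi).2 ⟨hb, ha⟩
    · rw [h1, h2]
  intro a ha hae hax b hb hbe hbx
  obtain ⟨ia, hia, hfa, hja⟩ := idx a ha hax
  obtain ⟨ib, hib, hfb, hjb⟩ := idx b hb hbx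
  obtain ⟨ie, hie, hfe, hje⟩ := idx e he hex
  have hne_a : ia ≠ ie := fun h => hae (same_idx ia hia a ha e he hfa (by rw [h]; exact hfe))
  have hne_b : ib ≠ ie := fun h => hbe (same_idx ib hib b hb e he hfb (by rw [h]; exact hfe))
  have hab : ia = ib := by
    rcases hja with h1 | h1 <;> rcases hjb with h2 | h2 <;> rcases hje with h3 | h3
    · omega
    · omega
    · exact absurd (h1.trans h3.symm) hne_a
    · exact absurd (hsucc_inj ib hib ie hie (h2.trans h3.symm)) hne_b
    · exact absurd (h2.trans h3.symm) hne_b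
    · exact absurd (hsucc_inj ia hia ie hie (h1.trans h3.symm)) hne_a
    · exact hsucc_inj ia hia ib hib (h1.trans h2.symm)
    · exact hsucc_inj ia hia ib hib (h1.trans h2.symm)
  refine same_idx ia hia a ha b hb hfa ?_
  rw [hab]; exact hfb

lemma case2 (n : ℕ) (hn : 3 ≤ n) (A : Finset (ℕ × ℕ))
    (hend : ∀ a ∈ A, 1 ≤ a.1 ∧ a.1 ≤ n ∧ 1 ≤ a.2 ∧ a.2 ≤ n)
    (e : ℕ × ℕ) (x y : ℕ)
    (hx1 : 1 ≤ x) (hxn : x ≤ n) (hy1 : 1 ≤ y) (hyn : y ≤ n) (hxy : x ≠ y)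
    (b₁ b₂ : ℕ × ℕ)
    (hb₁ : b₁ = (x, n + 1) ∨ b₁ = (n + 1, x))
    (hb₂ : b₂ = (n + 1, y) ∨ b₂ = (y, n + 1))
    (l : List (ℕ × ℕ)) (hl : IsStrategy (initState A) l) (hel : e ∉ l)
    (hpx : 1 ≤ (runSeq (initState A) l).pop x)
    (hpy : (runSeq (initState A) l).pop y = 0) :
    ∃ l', IsStrategy (initState (insert b₁ (insert b₂ (A.erase e)))) l' ∧
      resid (n + 1) (runSeq (initState (insert b₁ (insert b₂ (A.erase e)))) l') =
        resid n (runSeq (initState A) l) + (n - 1) := by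
  obtain ⟨hvseq, hterm⟩ := hl
  set A' := insert b₁ (insert b₂ (A.erase e)) with hA'def
  have hxne : x ≠ n + 1 := by omega
  have hyne : y ≠ n + 1 := by omega
  have hb₁A : b₁ ∉ A := by
    intro h; have := hend b₁ h
    rcases hb₁ with h' | h' <;> rw [h'] at this <;> simp at this <;> omega
  have hb₂A : b₂ ∉ A := by
    intro h; have := hend b₂ h
    rcases hb₂ with h' | h' <;> rw [h'] at this <;> simp at this <;> omega
  have ht1 : ∀ v : ℕ, (v = b₁.1 ∨ v = b₁.2) ↔ (v = x ∨ v = n + 1) := by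
    intro v; rcases hb₁ with h | h <;> rw [h] <;> exact ⟨fun h => by tauto, fun h => by tauto⟩
  have ht2 : ∀ v : ℕ, (v = b₂.1 ∨ v = b₂.2) ↔ (v = y ∨ v = n + 1) := by
    intro v; rcases hb₂ with h | h <;> rw [h] <;> exact ⟨fun h => by tauto, fun h => by tauto⟩
  have hnd := nodup_of_validSeq l _ hvseq
  have hmem_l : ∀ a ∈ l, a ∈ A := mem_arcs_of_validSeq l _ hvseq
  have hwl : ∀ a ∈ l, a.1 ≠ n + 1 ∧ a.2 ≠ n + 1 := by
    intro a ha; have := hend a (hmem_l a ha); omega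
  have hvs' : ValidSeq (initState A') l := by
    refine validSeq_transfer (n + 1) l (initState A) (initState A') hvseq hnd ?_ hwl ?_
    · intro a ha
      have haA := hmem_l a ha
      have hane : a ≠ e := fun h => hel (h ▸ ha)
      show a ∈ A'
      rw [hA'def]
      exact Finset.mem_insert.mpr (Or.inr (Finset.mem_insert.mpr
        (Or.inr (Finset.mem_erase.mpr ⟨hane, haA⟩))))
    · intro v _; exact le_rfl
  set f := runSeq (initState A) l with hfdef
  have hpop' := pop_runSeq l (initState A') hvs'
  have hpopf := pop_runSeq l (initState A) hvseq
  have hcnt1 : l.countP (fun a => decide (n + 1 = a.1 ∨ n + 1 = a.2)) = 0 := by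
    rw [List.countP_eq_zero]
    intro a ha
    have := hwl a ha
    simp only [decide_eq_true_eq]
    tauto
  have hpope : ∀ v, (runSeq (initState A') l).pop v = f.pop v := by
    intro v
    have h1 := hpop' v
    have h2 := hpopf v
    have e1 : (initState A').pop v = v := rfl
    have e2 : (initState A).pop v = v := rfl
    rw [hfdef]
    omega
  have hpopn1 : (runSeq (initState A') l).pop (n + 1) = n + 1 := by
    have h1 := hpop' (n + 1)
    have e1 : (initState A').pop (n + 1) = n + 1 := rfl
    omega
  have hb₁mem : b₁ ∈ (runSeq (initState A') l).arcs := by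
    rw [arcs_runSeq]
    refine Finset.mem_sdiff.mpr ⟨Finset.mem_insert_self _ _, ?_⟩
    rw [List.mem_toFinset]
    exact fun hc => hb₁A (hmem_l b₁ hc)
  have hpopv : ∀ v, (v = x ∨ v = n + 1) → 1 ≤ (runSeq (initState A') l).pop v := by
    rintro v (rfl | rfl)
    · rw [hpope]; exact hpx
    · rw [hpopn1]; omega
  have hvb₁ : validArc (runSeq (initState A') l) b₁ := by
    refine ⟨hb₁mem, hpopv _ ((ht1 _).mp (Or.inl rfl)), hpopv _ ((ht1 _).mp (Or.inr rfl))⟩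
  have hvall : ValidSeq (initState A') (l ++ [b₁]) := by
    rw [validSeq_append]
    exact ⟨hvs', hvb₁, trivial⟩
  have hF : runSeq (initState A') (l ++ [b₁]) = predStep (runSeq (initState A') l) b₁ := by
    rw [runSeq_append]; rfl
  set F := predStep (runSeq (initState A') l) b₁ with hFdef
  have hFy : F.pop y = 0 := by
    have hc : ¬(y = b₁.1 ∨ y = b₁.2) := by rw [ht1]; push_neg; exact ⟨Ne.symm hxy, hyne⟩
    show (if y = b₁.1 ∨ y = b₁.2 then _ - 1 else (runSeq (initState A') l).pop y) = 0
    rw [if_neg hc, hpope]; exact hpy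
  have hFx : F.pop x + 1 = f.pop x := by
    have hc : (x = b₁.1 ∨ x = b₁.2) := (ht1 x).mpr (Or.inl rfl)
    show (if x = b₁.1 ∨ x = b₁.2 then (runSeq (initState A') l).pop x - 1 else _) + 1 = f.pop x
    rw [if_pos hc, hpope]
    omega
  have hFn1 : F.pop (n + 1) = n := by
    have hc : ((n:ℕ) + 1 = b₁.1 ∨ (n:ℕ) + 1 = b₁.2) := (ht1 _).mpr (Or.inr rfl)
    show (if (n:ℕ) + 1 = b₁.1 ∨ (n:ℕ) + 1 = b₁.2 then (runSeq (initState A') l).pop (n+1) - 1 else _) = n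
    rw [if_pos hc, hpopn1]
    omega
  have hFother : ∀ v, v ≠ x → v ≠ n + 1 → F.pop v = f.pop v := by
    intro v hvx hvn
    have hc : ¬(v = b₁.1 ∨ v = b₁.2) := by rw [ht1]; push_neg; exact ⟨hvx, hvn⟩
    show (if v = b₁.1 ∨ v = b₁.2 then _ - 1 else (runSeq (initState A') l).pop v) = f.pop v
    rw [if_neg hc, hpope]
  have harcsF : F.arcs = (A' \ l.toFinset).erase b₁ := by
    show ((runSeq (initState A') l).arcs).erase b₁ = _
    rw [arcs_runSeq]
    rfl
  have htermF : Terminal F := by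
    intro a haF hva
    rw [harcsF] at haF
    obtain ⟨hab₁, hmemSd⟩ := Finset.mem_erase.mp haF
    obtain ⟨haA', hanl⟩ := Finset.mem_sdiff.mp hmemSd
    rw [List.mem_toFinset] at hanl
    rcases Finset.mem_insert.mp haA' with h | h
    · exact hab₁ h
    rcases Finset.mem_insert.mp h with h | h
    · -- a = b₂ : endpoint y has population 0
      subst h
      have h2 := hva.2
      rcases hb₂ with h' | h' <;> rw [h'] at h2 <;> simp only at h2 <;> rw [hFy] at h2 <;> omega
    · have haA : a ∈ A := Finset.mem_of_mem_erase h
      have hae : a ≠ e := (Finset.mem_erase.mp h).1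
      have haf : a ∈ f.arcs := by
        rw [hfdef, arcs_runSeq]
        exact Finset.mem_sdiff.mpr ⟨haA, by rw [List.mem_toFinset]; exact hanl⟩
      have hnv := hterm a haf
      have hb := hend a haA
      have h1 : F.pop a.1 ≤ f.pop a.1 := by
        by_cases hc : a.1 = x
        · rw [hc]; omega
        · rw [hFother a.1 hc (by omega)]
      have h2 : F.pop a.2 ≤ f.pop a.2 := by
        by_cases hc : a.2 = x
        · rw [hc]; omega
        · rw [hFother a.2 hc (by omega)]
      exact hnv ⟨haf, le_trans (le_trans hva.2.1 h1) le_rfl, le_trans hva.2.2 h2⟩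
  refine ⟨l ++ [b₁], ⟨hvall, by rw [hF]; exact htermF⟩, ?_⟩
  rw [hF]
  unfold resid
  rw [Finset.sum_Icc_succ_top (by omega : 1 ≤ n + 1), hFn1]
  have hptw : ∀ v ∈ Finset.Icc 1 n, f.pop v = F.pop v + if v = x then 1 else 0 := by
    intro v hv
    obtain ⟨h1, h2⟩ := Finset.mem_Icc.mp hv
    by_cases hvx : v = x
    · subst hvx; rw [if_pos rfl]; omega
    · rw [if_neg hvx, hFother v hvx (by omega)]
      omega
  have hsum : ∑ v ∈ Finset.Icc 1 n, f.pop v = (∑ v ∈ Finset.Icc 1 n, F.pop v) + 1 := by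
    rw [Finset.sum_congr rfl hptw, Finset.sum_add_distrib]
    congr 1
    rw [Finset.sum_ite_eq' (Finset.Icc 1 n) x (fun _ => 1)]
    rw [if_pos (Finset.mem_Icc.mpr ⟨hx1, hxn⟩)]
  omega

lemma case1 (n : ℕ) (hn : 3 ≤ n) (A : Finset (ℕ × ℕ))
    (hend : ∀ a ∈ A, 1 ≤ a.1 ∧ a.1 ≤ n ∧ 1 ≤ a.2 ∧ a.2 ≤ n)
    (e : ℕ × ℕ) (x y : ℕ) (hxn : x ≤ n) (hyn : y ≤ n) (hxy : x ≠ y)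
    (hedir : e = (x, y) ∨ e = (y, x))
    (b₁ b₂ : ℕ × ℕ)
    (hb₁ : b₁ = (x, n + 1) ∨ b₁ = (n + 1, x))
    (hb₂ : b₂ = (n + 1, y) ∨ b₂ = (y, n + 1))
    (l₁ l₂ : List (ℕ × ℕ))
    (hl : IsStrategy (initState A) (l₁ ++ e :: l₂)) :
    ∃ l', IsStrategy (initState (insert b₁ (insert b₂ (A.erase e)))) l' ∧
      resid (n + 1) (runSeq (initState (insert b₁ (insert b₂ (A.erase e)))) l') =
        resid n (runSeq (initState A) (l₁ ++ e :: l₂)) + (n - 1) := by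
  obtain ⟨hvseq, hterm⟩ := hl
  set A' := insert b₁ (insert b₂ (A.erase e)) with hA'def
  have hxne : x ≠ n + 1 := by omega
  have hyne : y ≠ n + 1 := by omega
  have hb₁A : b₁ ∉ A := by
    intro h; have := hend b₁ h
    rcases hb₁ with h' | h' <;> rw [h'] at this <;> simp at this <;> omega
  have hb₂A : b₂ ∉ A := by
    intro h; have := hend b₂ h
    rcases hb₂ with h' | h' <;> rw [h'] at this <;> simp at this <;> omega
  have hb₁b₂ : b₁ ≠ b₂ := by
    rcases hb₁ with h | h <;> rcases hb₂ with h' | h' <;> rw [h, h'] <;>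
      simp only [ne_eq, Prod.mk.injEq, not_and] <;> omega
  have ht1 : ∀ v : ℕ, (v = b₁.1 ∨ v = b₁.2) ↔ (v = x ∨ v = n + 1) := by
    intro v; rcases hb₁ with h | h <;> rw [h] <;> exact ⟨fun h => by tauto, fun h => by tauto⟩
  have ht2 : ∀ v : ℕ, (v = b₂.1 ∨ v = b₂.2) ↔ (v = y ∨ v = n + 1) := by
    intro v; rcases hb₂ with h | h <;> rw [h] <;> exact ⟨fun h => by tauto, fun h => by tauto⟩
  have hte : ∀ v : ℕ, (v = e.1 ∨ v = e.2) ↔ (v = x ∨ v = y) := by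
    intro v; rcases hedir with h | h <;> rw [h] <;> exact ⟨fun h => by tauto, fun h => by tauto⟩
  have hnd := nodup_of_validSeq _ _ hvseq
  have hmem_l : ∀ a ∈ l₁ ++ e :: l₂, a ∈ A := mem_arcs_of_validSeq _ _ hvseq
  have hnd₁ : l₁.Nodup := hnd.of_append_left
  have hnd₂ : l₂.Nodup := (List.nodup_cons.mp hnd.of_append_right).2
  have hdisj : l₁.Disjoint (e :: l₂) := List.disjoint_of_nodup_append hnd
  have hel₁ : e ∉ l₁ := fun hc => hdisj hc List.mem_cons_self
  have hel₂ : e ∉ l₂ := (List.nodup_cons.mp hnd.of_append_right).1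
  have hsplit := (validSeq_append l₁ (e :: l₂) (initState A)).mp hvseq
  have hv₁ : ValidSeq (initState A) l₁ := hsplit.1
  have hve : validArc (runSeq (initState A) l₁) e := hsplit.2.1
  have hv₂ : ValidSeq (predStep (runSeq (initState A) l₁) e) l₂ := hsplit.2.2
  have hwl : ∀ a ∈ l₁ ++ e :: l₂, a.1 ≠ n + 1 ∧ a.2 ≠ n + 1 := by
    intro a ha; have := hend a (hmem_l a ha); omega
  have hv₁' : ValidSeq (initState A') l₁ := by
    refine validSeq_transfer (n + 1) l₁ (initState A) (initState A') hv₁ hnd₁ ?_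
      (fun a ha => hwl a (List.mem_append.mpr (Or.inl ha))) (fun v _ => le_rfl)
    intro a ha
    have haA := hmem_l a (List.mem_append.mpr (Or.inl ha))
    have hane : a ≠ e := fun hc => hel₁ (hc ▸ ha)
    show a ∈ A'
    rw [hA'def]
    exact Finset.mem_insert.mpr (Or.inr (Finset.mem_insert.mpr
      (Or.inr (Finset.mem_erase.mpr ⟨hane, haA⟩))))
  have ht'pop : ∀ v, (runSeq (initState A') l₁).pop v = (runSeq (initState A) l₁).pop v := by
    intro v
    have h1 := pop_runSeq l₁ (initState A') hv₁' v
    have h2 := pop_runSeq l₁ (initState A) hv₁ v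
    have e1 : (initState A').pop v = v := rfl
    have e2 : (initState A).pop v = v := rfl
    omega
  have hcnt0 : ∀ l₀ : List (ℕ × ℕ), (∀ a ∈ l₀, a ∈ A) →
      l₀.countP (fun a => decide (n + 1 = a.1 ∨ n + 1 = a.2)) = 0 := by
    intro l₀ h
    rw [List.countP_eq_zero]
    intro a ha
    have := hend a (h a ha)
    simp only [decide_eq_true_eq]
    omega
  have htn1 : (runSeq (initState A) l₁).pop (n + 1) = n + 1 := by
    have h2 := pop_runSeq l₁ (initState A) hv₁ (n + 1)
    have h3 := hcnt0 l₁ (fun a ha => hmem_l a (List.mem_append.mpr (Or.inl ha)))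
    have e2 : (initState A).pop (n + 1) = n + 1 := rfl
    omega
  have htx : 1 ≤ (runSeq (initState A) l₁).pop x ∧ 1 ≤ (runSeq (initState A) l₁).pop y := by
    obtain ⟨_, h1, h2⟩ := hve
    rcases hedir with h | h <;> rw [h] at h1 h2
    · exact ⟨h1, h2⟩
    · exact ⟨h2, h1⟩
  have hb₁mem : b₁ ∈ (runSeq (initState A') l₁).arcs := by
    rw [arcs_runSeq]
    refine Finset.mem_sdiff.mpr ⟨Finset.mem_insert_self _ _, ?_⟩
    rw [List.mem_toFinset]
    exact fun hc => hb₁A (hmem_l b₁ (List.mem_append.mpr (Or.inl hc)))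
  have hp1 : ∀ v, (v = x ∨ v = n + 1) → 1 ≤ (runSeq (initState A') l₁).pop v := by
    rintro v (rfl | rfl) <;> rw [ht'pop]
    · exact htx.1
    · rw [htn1]; omega
  have hvb₁ : validArc (runSeq (initState A') l₁) b₁ :=
    ⟨hb₁mem, hp1 _ ((ht1 _).mp (Or.inl rfl)), hp1 _ ((ht1 _).mp (Or.inr rfl))⟩
  have hpopstep : ∀ v, (predStep (runSeq (initState A') l₁) b₁).pop v =
      if v = x ∨ v = n + 1 then (runSeq (initState A) l₁).pop v - 1
      else (runSeq (initState A) l₁).pop v := by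
    intro v
    show (if v = b₁.1 ∨ v = b₁.2 then (runSeq (initState A') l₁).pop v - 1
      else (runSeq (initState A') l₁).pop v) = _
    by_cases hc : v = x ∨ v = n + 1
    · rw [if_pos ((ht1 v).mpr hc), if_pos hc, ht'pop]
    · rw [if_neg (fun hcc => hc ((ht1 v).mp hcc)), if_neg hc, ht'pop]
  have hvb₂ : validArc (predStep (runSeq (initState A') l₁) b₁) b₂ := by
    refine ⟨?_, ?_, ?_⟩
    · show b₂ ∈ ((runSeq (initState A') l₁).arcs).erase b₁
      refine Finset.mem_erase.mpr ⟨Ne.symm hb₁b₂, ?_⟩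
      rw [arcs_runSeq]
      refine Finset.mem_sdiff.mpr ⟨?_, ?_⟩
      · rw [hA'def]; exact Finset.mem_insert.mpr (Or.inl rfl) |> fun h => Finset.mem_insert.mpr (Or.inr h)
      · rw [List.mem_toFinset]
        exact fun hc => hb₂A (hmem_l b₂ (List.mem_append.mpr (Or.inl hc)))
    · have hcy : (b₂.1 = y ∨ b₂.1 = n + 1) := by
        rcases hb₂ with h | h <;> rw [h] <;> simp
      rcases hcy with h | h <;> rw [h, hpopstep]
      · rw [if_neg (by push_neg; exact ⟨Ne.symm hxy, hyne⟩)]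
        exact htx.2
      · rw [if_pos (Or.inr rfl), htn1]; omega
    · have hcy : (b₂.2 = y ∨ b₂.2 = n + 1) := by
        rcases hb₂ with h | h <;> rw [h] <;> simp
      rcases hcy with h | h <;> rw [h, hpopstep]
      · rw [if_neg (by push_neg; exact ⟨Ne.symm hxy, hyne⟩)]
        exact htx.2
      · rw [if_pos (Or.inr rfl), htn1]; omega
  have hv₂' : ValidSeq (predStep (predStep (runSeq (initState A') l₁) b₁) b₂) l₂ := by
    refine validSeq_transfer (n + 1) l₂ (predStep (runSeq (initState A) l₁) e) _ hv₂ hnd₂ ?_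
      (fun a ha => hwl a (List.mem_append.mpr (Or.inr (List.mem_cons_of_mem _ ha)))) ?_
    · intro a ha
      have haA : a ∈ A := hmem_l a (List.mem_append.mpr (Or.inr (List.mem_cons_of_mem _ ha)))
      have hae : a ≠ e := fun hc => hel₂ (hc ▸ ha)
      have hab₁ : a ≠ b₁ := fun hc => hb₁A (hc ▸ haA)
      have hab₂ : a ≠ b₂ := fun hc => hb₂A (hc ▸ haA)
      have hal₁ : a ∉ l₁ := fun hc => hdisj hc (List.mem_cons_of_mem _ ha)
      show a ∈ (((predStep (runSeq (initState A') l₁) b₁).arcs).erase b₂)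
      refine Finset.mem_erase.mpr ⟨hab₂, ?_⟩
      show a ∈ (((runSeq (initState A') l₁).arcs).erase b₁)
      refine Finset.mem_erase.mpr ⟨hab₁, ?_⟩
      rw [arcs_runSeq]
      refine Finset.mem_sdiff.mpr ⟨?_, by rw [List.mem_toFinset]; exact hal₁⟩
      rw [hA'def]
      exact Finset.mem_insert.mpr (Or.inr (Finset.mem_insert.mpr
        (Or.inr (Finset.mem_erase.mpr ⟨hae, haA⟩))))
    · intro v hv
      have hd2 : (predStep (predStep (runSeq (initState A') l₁) b₁) b₂).pop v =
          if v = b₂.1 ∨ v = b₂.2 then (predStep (runSeq (initState A') l₁) b₁).pop v - 1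
          else (predStep (runSeq (initState A') l₁) b₁).pop v := rfl
      have hde : (predStep (runSeq (initState A) l₁) e).pop v =
          if v = e.1 ∨ v = e.2 then (runSeq (initState A) l₁).pop v - 1
          else (runSeq (initState A) l₁).pop v := rfl
      rw [hd2, hde, hpopstep]
      by_cases hvx : v = x <;> by_cases hvy : v = y
      · exact absurd (hvx.symm.trans hvy) hxy
      · rw [if_pos ((hte v).mpr (Or.inl hvx)), if_neg (fun hc => by
          rcases (ht2 v).mp hc with h | h; exact hvy h; exact hv h),
          if_pos (Or.inl hvx)]
      · rw [if_pos ((hte v).mpr (Or.inr hvy)), if_pos ((ht2 v).mpr (Or.inl hvy)),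
          if_neg (by push_neg; exact ⟨hvx, hv⟩)]
      · rw [if_neg (fun hc => by rcases (hte v).mp hc with h | h; exact hvx h; exact hvy h),
          if_neg (fun hc => by rcases (ht2 v).mp hc with h | h; exact hvy h; exact hv h),
          if_neg (by push_neg; exact ⟨hvx, hv⟩)]
  have hvall : ValidSeq (initState A') (l₁ ++ b₁ :: b₂ :: l₂) := by
    rw [validSeq_append]
    exact ⟨hv₁', hvb₁, hvb₂, hv₂'⟩
  -- count comparison
  have hcount : ∀ v, 1 ≤ v → v ≤ n →
      (l₁ ++ b₁ :: b₂ :: l₂).countP (fun a => decide (v = a.1 ∨ v = a.2)) =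
      (l₁ ++ e :: l₂).countP (fun a => decide (v = a.1 ∨ v = a.2)) := by
    intro v h1 h2
    have hvne : v ≠ n + 1 := by omega
    simp only [List.countP_append, List.countP_cons, decide_eq_true_eq]
    have c1 : (if v = b₁.1 ∨ v = b₁.2 then 1 else 0) + (if v = b₂.1 ∨ v = b₂.2 then 1 else 0)
        = if v = e.1 ∨ v = e.2 then 1 else 0 := by
      by_cases hvx : v = x <;> by_cases hvy : v = y
      · exact absurd (hvx.symm.trans hvy) hxy
      · rw [if_pos ((ht1 v).mpr (Or.inl hvx)), if_neg (fun hc => by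
          rcases (ht2 v).mp hc with h | h; exact hvy h; exact hvne h),
          if_pos ((hte v).mpr (Or.inl hvx))]
      · rw [if_neg (fun hc => by rcases (ht1 v).mp hc with h | h; exact hvx h; exact hvne h),
          if_pos ((ht2 v).mpr (Or.inl hvy)), if_pos ((hte v).mpr (Or.inr hvy))]
      · rw [if_neg (fun hc => by rcases (ht1 v).mp hc with h | h; exact hvx h; exact hvne h),
          if_neg (fun hc => by rcases (ht2 v).mp hc with h | h; exact hvy h; exact hvne h),
          if_neg (fun hc => by rcases (hte v).mp hc with h | h; exact hvx h; exact hvy h)]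
    omega
  have hFpop : ∀ v, 1 ≤ v → v ≤ n →
      (runSeq (initState A') (l₁ ++ b₁ :: b₂ :: l₂)).pop v =
      (runSeq (initState A) (l₁ ++ e :: l₂)).pop v := by
    intro v h1 h2
    have ha := pop_runSeq _ (initState A') hvall v
    have hb := pop_runSeq _ (initState A) hvseq v
    have hc := hcount v h1 h2
    have e1 : (initState A').pop v = v := rfl
    have e2 : (initState A).pop v = v := rfl
    omega
  have hFn1 : (runSeq (initState A') (l₁ ++ b₁ :: b₂ :: l₂)).pop (n + 1) = n - 1 := by
    have ha := pop_runSeq _ (initState A') hvall (n + 1)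
    have hc1 := hcnt0 l₁ (fun a ha => hmem_l a (List.mem_append.mpr (Or.inl ha)))
    have hc2 := hcnt0 l₂ (fun a ha => hmem_l a
      (List.mem_append.mpr (Or.inr (List.mem_cons_of_mem _ ha))))
    have hd1 : (decide ((n + 1 : ℕ) = b₁.1 ∨ (n + 1 : ℕ) = b₁.2)) = true :=
      decide_eq_true ((ht1 _).mpr (Or.inr rfl))
    have hd2 : (decide ((n + 1 : ℕ) = b₂.1 ∨ (n + 1 : ℕ) = b₂.2)) = true :=
      decide_eq_true ((ht2 _).mpr (Or.inr rfl))
    rw [List.countP_append, List.countP_cons, List.countP_cons, hd1, hd2, hc1, hc2] at ha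
    have e1 : (initState A').pop (n + 1) = n + 1 := rfl
    simp only [if_true] at ha
    omega
  have htermF : Terminal (runSeq (initState A') (l₁ ++ b₁ :: b₂ :: l₂)) := by
    intro a ha hva
    rw [arcs_runSeq] at ha
    obtain ⟨haA', hanl⟩ := Finset.mem_sdiff.mp ha
    rw [List.mem_toFinset] at hanl
    simp only [List.mem_append, List.mem_cons, not_or] at hanl
    obtain ⟨hal₁, hab₁, hab₂, hal₂⟩ := hanl
    have haAe : a ∈ A ∧ a ≠ e := by
      rcases Finset.mem_insert.mp haA' with h | h
      · exact absurd h hab₁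
      rcases Finset.mem_insert.mp h with h | h
      · exact absurd h hab₂
      · exact ⟨Finset.mem_of_mem_erase h, (Finset.mem_erase.mp h).1⟩
    have haf : a ∈ (runSeq (initState A) (l₁ ++ e :: l₂)).arcs := by
      rw [arcs_runSeq]
      refine Finset.mem_sdiff.mpr ⟨haAe.1, ?_⟩
      rw [List.mem_toFinset]
      simp only [List.mem_append, List.mem_cons, not_or]
      exact ⟨hal₁, haAe.2, hal₂⟩
    have hbound := hend a haAe.1
    have h1 := hFpop a.1 hbound.1 hbound.2.1
    have h2 := hFpop a.2 hbound.2.2.1 hbound.2.2.2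
    exact hterm a haf ⟨haf, by rw [← h1]; exact hva.2.1, by rw [← h2]; exact hva.2.2⟩
  refine ⟨l₁ ++ b₁ :: b₂ :: l₂, ⟨hvall, htermF⟩, ?_⟩
  unfold resid
  rw [Finset.sum_Icc_succ_top (by omega : 1 ≤ n + 1), hFn1]
  congr 1
  refine Finset.sum_congr rfl (fun v hv => ?_)
  obtain ⟨h1, h2⟩ := Finset.mem_Icc.mp hv
  exact hFpop v h1 h2

/-- Let `n ≥ 3`, let `A` be an orientation of the cycle `C_n` (vertices
labelled bijectively by `v_1, …, v_n` via `p`), let `v_p, v_q` be two adjacent vertices of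
the cycle joined by the arc `e ∈ A`, and let `l` be a predator-prey strategy on
`D = (A, ρ)`. If `A'` is obtained from `A` by squeezing in a new vertex `v_{n+1}`,
replacing `e` by an arc joining `v_p` and `v_{n+1}` and an arc joining `v_{n+1}` and `v_q`
(each in either direction), then there is a predator-prey strategy on `D' = (A', ρ)` whose
residual population equals `r_l(D) + (n - 1)`. -/
theorem cycle_extension_by_squeezing (n : ℕ) (hn : 3 ≤ n) (p : ℕ → ℕ)
    (A : Finset (ℕ × ℕ)) (hcyc : CycleOrientation n p A)
    (vp vq : ℕ)
    (hadj : ∃ i < n, (vp = p i ∧ vq = p ((i + 1) % n)) ∨ (vp = p ((i + 1) % n) ∧ vq = p i))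
    (e : ℕ × ℕ) (he : e ∈ A) (hedir : e = (vp, vq) ∨ e = (vq, vp))
    (a₁ a₂ : ℕ × ℕ)
    (ha₁ : a₁ = (vp, n + 1) ∨ a₁ = (n + 1, vp))
    (ha₂ : a₂ = (n + 1, vq) ∨ a₂ = (vq, n + 1))
    (l : List (ℕ × ℕ)) (hl : IsStrategy (initState A) l) :
    ∃ l' : List (ℕ × ℕ), IsStrategy (initState (insert a₁ (insert a₂ (A.erase e)))) l' ∧
      resid (n + 1) (runSeq (initState (insert a₁ (insert a₂ (A.erase e)))) l') =
        resid n (runSeq (initState A) l) + (n - 1) := by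
  have hmaps : ∀ i, i < n → 1 ≤ p i ∧ p i ≤ n := by
    intro i hi
    have := hcyc.1.mapsTo (Set.mem_Iio.mpr hi)
    simpa [Set.mem_Icc] using this
  have hend : ∀ a ∈ A, 1 ≤ a.1 ∧ a.1 ≤ n ∧ 1 ≤ a.2 ∧ a.2 ≤ n := by
    intro a ha
    obtain ⟨i, hi, h⟩ := hcyc.2.2 a ha
    have h1 := hmaps i hi
    have h2 := hmaps ((i + 1) % n) (Nat.mod_lt _ (by omega))
    rcases h with h | h <;> rw [h]
    · exact ⟨h1.1, h1.2, h2.1, h2.2⟩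
    · exact ⟨h2.1, h2.2, h1.1, h1.2⟩
  obtain ⟨i₀, hi₀, hpq⟩ := hadj
  have hsucclt : (i₀ + 1) % n < n := Nat.mod_lt _ (by omega)
  have hii : i₀ ≠ (i₀ + 1) % n := by
    rcases Nat.lt_or_ge (i₀ + 1) n with h | h
    · rw [Nat.mod_eq_of_lt h]; omega
    · have h' : i₀ + 1 = n := by omega
      rw [h', Nat.mod_self]; omega
  have hvpvq : vp ≠ vq := by
    rcases hpq with ⟨h1, h2⟩ | ⟨h1, h2⟩ <;> rw [h1, h2] <;> intro hc
    · exact hii (hcyc.1.injOn (Set.mem_Iio.mpr hi₀) (Set.mem_Iio.mpr hsucclt) hc)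
    · exact hii (hcyc.1.injOn (Set.mem_Iio.mpr hi₀) (Set.mem_Iio.mpr hsucclt) hc.symm)
  have hvp_idx : ∃ j, j < n ∧ vp = p j := by
    rcases hpq with ⟨h1, _⟩ | ⟨h1, _⟩
    · exact ⟨i₀, hi₀, h1⟩
    · exact ⟨(i₀ + 1) % n, hsucclt, h1⟩
  have hvq_idx : ∃ j, j < n ∧ vq = p j := by
    rcases hpq with ⟨_, h2⟩ | ⟨_, h2⟩
    · exact ⟨(i₀ + 1) % n, hsucclt, h2⟩
    · exact ⟨i₀, hi₀, h2⟩
  have hvp_range : 1 ≤ vp ∧ vp ≤ n := by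
    obtain ⟨j, hj, h⟩ := hvp_idx; rw [h]; exact hmaps j hj
  have hvq_range : 1 ≤ vq ∧ vq ≤ n := by
    obtain ⟨j, hj, h⟩ := hvq_idx; rw [h]; exact hmaps j hj
  by_cases hel : e ∈ l
  · obtain ⟨l₁, l₂, rfl⟩ := List.append_of_mem hel
    exact case1 n hn A hend e vp vq hvp_range.2 hvq_range.2 hvpvq hedir a₁ a₂ ha₁ ha₂ l₁ l₂ hl
  · obtain ⟨hvseq, hterm⟩ := hl
    have hndl := nodup_of_validSeq l _ hvseq
    have hmem_l : ∀ a ∈ l, a ∈ A := mem_arcs_of_validSeq l _ hvseq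
    have hef : e ∈ (runSeq (initState A) l).arcs := by
      rw [arcs_runSeq]
      exact Finset.mem_sdiff.mpr ⟨he, by rw [List.mem_toFinset]; exact hel⟩
    have hnv := hterm e hef
    have hvp_e : vp = e.1 ∨ vp = e.2 := by
      rcases hedir with h | h <;> rw [h]
      · exact Or.inl rfl
      · exact Or.inr rfl
    have hvq_e : vq = e.1 ∨ vq = e.2 := by
      rcases hedir with h | h <;> rw [h]
      · exact Or.inr rfl
      · exact Or.inl rfl
    have hzero : (runSeq (initState A) l).pop vp = 0 ∨ (runSeq (initState A) l).pop vq = 0 := by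
      by_contra hc
      push_neg at hc
      obtain ⟨hc1, hc2⟩ := hc
      refine hnv ⟨hef, ?_, ?_⟩ <;> rcases hedir with h | h <;> rw [h] <;> simp only <;> omega
    have hcnt : ∀ x : ℕ, (∃ j, j < n ∧ x = p j) → (x = e.1 ∨ x = e.2) →
        l.countP (fun a => decide (x = a.1 ∨ x = a.2)) ≤ 1 := by
      rintro x ⟨j, hj, hxj⟩ hxe
      refine countP_le_one _ _ hndl ?_
      intro a ha hpa b hb hpb
      have haA : a ∈ A := hmem_l a ha
      have hbA : b ∈ A := hmem_l b hb
      have hae : a ≠ e := fun hc => hel (hc ▸ ha)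
      have hbe : b ≠ e := fun hc => hel (hc ▸ hb)
      exact other_arc_unique n hn p A hcyc x j hj hxj e he hxe a haA hae
        (of_decide_eq_true hpa) b hbA hbe (of_decide_eq_true hpb)
    have hfp := pop_runSeq l (initState A) hvseq vp
    have hfq := pop_runSeq l (initState A) hvseq vq
    have e1 : (initState A).pop vp = vp := rfl
    have e2 : (initState A).pop vq = vq := rfl
    have hcp := hcnt vp hvp_idx hvp_e
    have hcq := hcnt vq hvq_idx hvq_e
    rcases hzero with h0 | h0
    · -- vp dies: use x := vq  (strategy appends the arc a₂ joining vq and n+1)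
      have hq1 : 1 ≤ (runSeq (initState A) l).pop vq := by omega
      obtain ⟨l', hstrat, hres⟩ := case2 n hn A hend e vq vp hvq_range.1 hvq_range.2
        hvp_range.1 hvp_range.2 (Ne.symm hvpvq) a₂ a₁ ha₂.symm ha₁.symm l
        ⟨hvseq, hterm⟩ hel hq1 h0
      rw [Finset.insert_comm] at hstrat hres
      exact ⟨l', hstrat, hres⟩
    · -- vq dies: use x := vp
      have hp1 : 1 ≤ (runSeq (initState A) l).pop vp := by omega
      exact case2 n hn A hend e vp vq hvp_range.1 hvp_range.2 hvq_range.1 hvq_range.2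
        hvpvq a₁ a₂ ha₁ ha₂ l ⟨hvseq, hterm⟩ hel hp1 h0
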